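/- In the complete graph K_n with window size λ = n (unbounded memory), a set S is a TWC target set if and only if iterating the map ℓ ↦ |{v : t(v) ≤ ℓ}| + adjustments starting from |S| (with S the |S| largest-threshold vertices) eventually covers all n vertices; formally, with A[ℓ] = |{v ∈ V \ S : t(v) ≤ ℓ}|, the sequence ℓ_0 = |S|, ℓ_{r+1} = |S| + A[ℓ_r] is non-decreasing and S is a target set iff its limit equals n. -/

import Mathlib

set_option linter.unusedVariables false

open Finset

variable {V : Type*} [Fintype V] [DecidableEq V]

/-- `influenced G t lam S r` : set of influenced nodes after round `r`. -/
def influenced (G : SimpleGraph V) [DecidableRel G.Adj] (t : V → ℕ) (lam : ℕ)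
    (S : Finset V) : ℕ → Finset V
  | 0 => S
  | r + 1 =>
    let prev := influenced G t lam S r
    let A := if r + 1 ≤ lam then prev else prev \ influenced G t lam S (r - lam)
    prev ∪ Finset.univ.filter fun v => t v ≤ (G.neighborFinset v ∩ A).card
  termination_by r => r
  decreasing_by all_goals omega

/-- `activeSet G t lam S r` : set of active nodes at round `r`. -/
def activeSet (G : SimpleGraph V) [DecidableRel G.Adj] (t : V → ℕ) (lam : ℕ)
    (S : Finset V) (r : ℕ) : Finset V :=
  if r = 0 then ∅
  else if r ≤ lam then influenced G t lam S (r - 1)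
  else influenced G t lam S (r - 1) \ influenced G t lam S (r - 1 - lam)

def isTargetSet (G : SimpleGraph V) [DecidableRel G.Adj] (t : V → ℕ) (lam : ℕ)
    (S : Finset V) : Prop :=
  ∃ r, influenced G t lam S r = Finset.univ

def pathGraph (n : ℕ) : SimpleGraph (Fin n) where
  Adj i j := i.val + 1 = j.val ∨ j.val + 1 = i.val
  symm := ⟨fun i j h => h.symm⟩
  loopless := ⟨fun i h => by rcases h with h | h <;> omega⟩

instance (n : ℕ) : DecidableRel (pathGraph n).Adj :=
  fun i j => inferInstanceAs (Decidable (i.val + 1 = j.val ∨ j.val + 1 = i.val))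

def ringGraph (n : ℕ) : SimpleGraph (Fin n) where
  Adj i j := i ≠ j ∧ ((i.val + 1) % n = j.val ∨ (j.val + 1) % n = i.val)
  symm := ⟨fun i j h => ⟨h.1.symm, h.2.symm⟩⟩
  loopless := ⟨fun i h => h.1 rfl⟩

instance (n : ℕ) : DecidableRel (ringGraph n).Adj :=
  fun i j => inferInstanceAs (Decidable (_ ∧ (_ ∨ _)))

instance : DecidableRel (⊤ : SimpleGraph V).Adj :=
  fun a b => inferInstanceAs (Decidable (a ≠ b))


/-- The auxiliary sequence `ℓ_0 = |S|`, `ℓ_{r+1} = |S| + A[ℓ_r]`, where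
`A[ℓ] = |{v ∈ V \ S : t v ≤ ℓ}|`. -/
def ellSeq (t : V → ℕ) (S : Finset V) : ℕ → ℕ
  | 0 => S.card
  | r + 1 => S.card + ((Finset.univ \ S).filter fun v => t v ≤ ellSeq t S r).card

lemma influenced_succ (G : SimpleGraph V) [DecidableRel G.Adj] (t : V → ℕ) (lam : ℕ)
    (S : Finset V) (r : ℕ) :
    influenced G t lam S (r+1) =
      influenced G t lam S r ∪ Finset.univ.filter fun v => t v ≤
        (G.neighborFinset v ∩ (if r + 1 ≤ lam then influenced G t lam S r
          else influenced G t lam S r \ influenced G t lam S (r - lam))).card := by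
  rw [influenced]

lemma top_inter (v : V) (B : Finset V) (hv : v ∉ B) :
    (⊤ : SimpleGraph V).neighborFinset v ∩ B = B := by
  ext u
  simp only [Finset.mem_inter, SimpleGraph.mem_neighborFinset, SimpleGraph.top_adj]
  exact ⟨fun h => h.2, fun h => ⟨fun he => hv (he ▸ h), h⟩⟩

lemma ell_mono_succ (t : V → ℕ) (S : Finset V) : ∀ r, ellSeq t S r ≤ ellSeq t S (r+1) := by
  intro r
  induction r with
  | zero => rw [ellSeq, ellSeq]; exact Nat.le_add_right _ _
  | succ r ih =>
    rw [ellSeq, ellSeq]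
    exact Nat.add_le_add_left (Finset.card_le_card (fun v hv => by
      simp only [Finset.mem_filter] at hv ⊢; exact ⟨hv.1, hv.2.trans ih⟩)) _

lemma ell_mono (t : V → ℕ) (S : Finset V) : Monotone (ellSeq t S) :=
  monotone_nat_of_le_succ (ell_mono_succ t S)

lemma card_SF (t : V → ℕ) (S : Finset V) (L : ℕ) :
    (S ∪ (Finset.univ \ S).filter (fun v => t v ≤ L)).card
      = S.card + ((Finset.univ \ S).filter (fun v => t v ≤ L)).card :=
  Finset.card_union_of_disjoint
    (Finset.disjoint_sdiff.mono_right (Finset.filter_subset _ _))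

lemma ell_le (t : V → ℕ) (S : Finset V) : ∀ r, ellSeq t S r ≤ Fintype.card V := by
  intro r
  have hu : Fintype.card V = (Finset.univ : Finset V).card := (Finset.card_univ).symm
  cases r with
  | zero => rw [ellSeq, hu]; exact Finset.card_le_univ S
  | succ r =>
    rw [ellSeq, hu]
    calc S.card + ((Finset.univ \ S).filter fun v => t v ≤ ellSeq t S r).card
        ≤ S.card + (Finset.univ \ S).card :=
          Nat.add_le_add_left (Finset.card_filter_le _ _) _
      _ = (Finset.univ : Finset V).card := by
          rw [Nat.add_comm]
          exact Finset.card_sdiff_add_card_eq_card (Finset.subset_univ S)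

lemma ell_stable (t : V → ℕ) (S : Finset V) (k : ℕ)
    (h : ellSeq t S (k+1) = ellSeq t S k) :
    ∀ m, ellSeq t S (k + m) = ellSeq t S k := by
  intro m
  induction m with
  | zero => rfl
  | succ m ih =>
    have e0 : k + (m+1) = (k+m) + 1 := by omega
    have e1 : ellSeq t S ((k+m)+1)
        = S.card + ((Finset.univ \ S).filter fun v => t v ≤ ellSeq t S (k+m)).card := rfl
    have e2 : ellSeq t S (k+1)
        = S.card + ((Finset.univ \ S).filter fun v => t v ≤ ellSeq t S k).card := rfl
    rw [e0, e1, ih, ← e2, h]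

lemma exists_stable (t : V → ℕ) (S : Finset V) :
    ∃ k ≤ Fintype.card V, ellSeq t S (k+1) = ellSeq t S k := by
  by_contra hcon
  push_neg at hcon
  have key : ∀ k, k ≤ Fintype.card V + 1 → k ≤ ellSeq t S k := by
    intro k
    induction k with
    | zero => intro _; exact Nat.zero_le _
    | succ k ih =>
      intro hk
      have h1 := ih (by omega)
      have h2 := ell_mono_succ t S k
      have h3 := hcon k (by omega)
      omega
  have := key (Fintype.card V + 1) le_rfl
  have := ell_le t S (Fintype.card V + 1)
  omega

/-- generic one-step computation in the complete graph -/
lemma step_eq (t : V → ℕ) (S X : Finset V) (hSX : S ⊆ X)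
    (hX : ∀ v ∈ X, v ∉ S → t v ≤ X.card) :
    X ∪ Finset.univ.filter (fun v => t v ≤ ((⊤ : SimpleGraph V).neighborFinset v ∩ X).card)
      = S ∪ (Finset.univ \ S).filter (fun v => t v ≤ X.card) := by
  ext v
  simp only [Finset.mem_union, Finset.mem_filter, Finset.mem_univ, true_and,
    Finset.mem_sdiff]
  by_cases hvS : v ∈ S
  · exact iff_of_true (Or.inl (hSX hvS)) (Or.inl hvS)
  · simp only [hvS, not_false_iff, true_and, false_or]
    by_cases hvX : v ∈ X
    · constructor
      · intro _; exact hX v hvX hvS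
      · intro _; exact Or.inl hvX
    · rw [top_inter v X hvX]
      constructor
      · rintro (h | h)
        · exact absurd h hvX
        · exact h
      · exact Or.inr

lemma influenced_formula (t : V → ℕ) (S : Finset V) :
    ∀ r, r + 1 ≤ Fintype.card V →
    influenced (⊤ : SimpleGraph V) t (Fintype.card V) S (r+1) =
      S ∪ (Finset.univ \ S).filter (fun v => t v ≤ ellSeq t S r) := by
  intro r
  induction r with
  | zero =>
    intro hr
    rw [influenced_succ, if_pos hr]
    show influenced _ t _ S 0 ∪ _ = _
    rw [influenced]
    have := step_eq t S S (le_refl S) (fun v hv hv' => absurd hv hv')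
    rw [this]
    rfl
  | succ r ih =>
    intro hr
    have hr' : r + 1 ≤ Fintype.card V := by omega
    rw [influenced_succ, if_pos hr, ih hr']
    have hcard : (S ∪ (Finset.univ \ S).filter (fun v => t v ≤ ellSeq t S r)).card
        = ellSeq t S (r+1) := by
      rw [card_SF]; rfl
    rw [step_eq t S _ Finset.subset_union_left ?hX, hcard]
    case hX =>
      intro v hv hvS
      rw [hcard]
      rcases Finset.mem_union.1 hv with h | h
      · exact absurd h hvS
      · exact (Finset.mem_filter.1 h).2.trans (ell_mono_succ t S r)

lemma influenced_card (t : V → ℕ) (S : Finset V) :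
    ∀ r, r ≤ Fintype.card V →
    (influenced (⊤ : SimpleGraph V) t (Fintype.card V) S r).card = ellSeq t S r := by
  intro r hr
  cases r with
  | zero => rw [influenced, ellSeq]
  | succ r =>
    rw [influenced_formula t S r hr, card_SF]
    rfl

lemma influenced_bounded (t : V → ℕ) (S : Finset V) (L : ℕ)
    (hcard : (S ∪ (Finset.univ \ S).filter (fun v => t v ≤ L)).card ≤ L) :
    ∀ r, influenced (⊤ : SimpleGraph V) t (Fintype.card V) S r
      ⊆ S ∪ (Finset.univ \ S).filter (fun v => t v ≤ L) := by
  intro r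
  induction r with
  | zero => rw [influenced]; exact Finset.subset_union_left
  | succ r ih =>
    rw [influenced_succ]
    apply Finset.union_subset ih
    intro v hv
    simp only [Finset.mem_filter, Finset.mem_univ, true_and] at hv
    have hA : (if r + 1 ≤ Fintype.card V then influenced ⊤ t (Fintype.card V) S r
        else influenced ⊤ t (Fintype.card V) S r
          \ influenced ⊤ t (Fintype.card V) S (r - Fintype.card V))
        ⊆ influenced ⊤ t (Fintype.card V) S r := by
      split_ifs
      · exact Finset.Subset.refl _
      · exact Finset.sdiff_subset
    have htv : t v ≤ L := by
      refine Nat.le_trans hv (Nat.le_trans ?_ hcard)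
      exact Finset.card_le_card
        (Finset.Subset.trans (Finset.Subset.trans Finset.inter_subset_right hA) ih)
    by_cases hvS : v ∈ S
    · exact Finset.mem_union_left _ hvS
    · exact Finset.mem_union_right _
        (Finset.mem_filter.2 ⟨Finset.mem_sdiff.2 ⟨Finset.mem_univ v, hvS⟩, htv⟩)

/-- in the complete graph with window size `λ = n` and `S` a set of
largest-threshold vertices, the sequence `ℓ_r` is non-decreasing and `S` is a
TWC target set iff the sequence reaches `n`. -/
theorem stmt14 (t : V → ℕ) (ht : ∀ v, 1 ≤ t v ∧ t v ≤ Fintype.card V - 1)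
    (S : Finset V) (hS : ∀ v ∈ S, ∀ u ∉ S, t u ≤ t v) :
    (∀ r : ℕ, ellSeq t S r ≤ ellSeq t S (r + 1)) ∧
    (isTargetSet (⊤ : SimpleGraph V) t (Fintype.card V) S ↔
      ∃ r, ellSeq t S r = Fintype.card V) := by
  constructor
  · exact ell_mono_succ t S
  constructor
  · rintro ⟨R, hR⟩
    by_contra hcon
    push_neg at hcon
    obtain ⟨k, hk, hst⟩ := exists_stable t S
    set L := ellSeq t S k with hL
    have hLlt : L < Fintype.card V := lt_of_le_of_ne (ell_le t S k) (hcon k)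
    have hcard : (S ∪ (Finset.univ \ S).filter (fun v => t v ≤ L)).card ≤ L := by
      rw [card_SF]
      have e : S.card + ((Finset.univ \ S).filter fun v => t v ≤ L).card
          = ellSeq t S (k+1) := rfl
      rw [e, hst]
    have hsub := influenced_bounded t S L hcard R
    rw [hR] at hsub
    have h2 : Fintype.card V
        ≤ (S ∪ (Finset.univ \ S).filter fun v => t v ≤ L).card := by
      rw [← Finset.card_univ]
      exact Finset.card_le_card hsub
    omega
  · rintro ⟨R, hR⟩
    obtain ⟨k, hk, hst⟩ := exists_stable t S
    have hle := ell_le t S (Fintype.card V)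
    have hln : ellSeq t S (Fintype.card V) = Fintype.card V := by
      rcases le_or_gt R (Fintype.card V) with h | h
      · have hm := ell_mono t S h
        omega
      · have h1 : ellSeq t S R = ellSeq t S k := by
          have h' := ell_stable t S k hst (R - k)
          have e : k + (R - k) = R := by omega
          rwa [e] at h'
        have h2 : ellSeq t S (Fintype.card V) = ellSeq t S k := by
          have h' := ell_stable t S k hst (Fintype.card V - k)
          have e : k + (Fintype.card V - k) = Fintype.card V := by omega
          rwa [e] at h'
        omega
    refine ⟨Fintype.card V, ?_⟩
    apply Finset.eq_univ_of_card
    rw [influenced_card t S _ le_rfl, hln]
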